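/- If {M₁,…,M_s} is a Hurwitz–Radon family of order n and {L₁,…,L_t} is a Hurwitz–Radon family of order m, then {P⊗M₁⊗E_m, …, P⊗M_s⊗E_m, Q⊗E_n⊗L₁, …, Q⊗E_n⊗L_t, A⊗E_{nm}} is a Hurwitz–Radon family of order 2nm, where A = [[0,1],[-1,0]], P = [[0,1],[1,0]], Q = [[1,0],[0,-1]]. -/
import Mathlib


open Matrix Kronecker BigOperators

/-- A family of square real matrices is a Hurwitz–Radon family if each member is
orthogonal and skew-symmetric, and distinct members anticommute. -/
def IsHRFamily {ι σ : Type*} [Fintype ι] [DecidableEq ι] (A : σ → Matrix ι ι ℝ) : Prop :=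
  (∀ i, A i * (A i)ᵀ = 1) ∧ (∀ i, A i = -(A i)ᵀ) ∧
    ∀ i j, i ≠ j → A i * A j = -(A j * A i)

lemma kron_transpose {l m n p : Type*} (A : Matrix l m ℝ) (B : Matrix n p ℝ) :
    (A ⊗ₖ B)ᵀ = Aᵀ ⊗ₖ Bᵀ := by
  ext ⟨i, j⟩ ⟨k, l⟩
  simp [Matrix.kroneckerMap_apply]

lemma neg_kron {l m n p : Type*} (A : Matrix l m ℝ) (B : Matrix n p ℝ) :
    (-A) ⊗ₖ B = -(A ⊗ₖ B) := by
  ext ⟨i, j⟩ ⟨k, l⟩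
  simp [Matrix.kroneckerMap_apply]

lemma kron_neg {l m n p : Type*} (A : Matrix l m ℝ) (B : Matrix n p ℝ) :
    A ⊗ₖ (-B) = -(A ⊗ₖ B) := by
  ext ⟨i, j⟩ ⟨k, l⟩
  simp [Matrix.kroneckerMap_apply]

theorem hr_family_combine {ι κ : Type*} [Fintype ι] [DecidableEq ι]
    [Fintype κ] [DecidableEq κ] {s t : ℕ}
    (M : Fin s → Matrix ι ι ℝ) (hM : IsHRFamily M)
    (L : Fin t → Matrix κ κ ℝ) (hL : IsHRFamily L) :
    IsHRFamily
      (Sum.elim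
        (Sum.elim
          (fun i : Fin s => (!![0, 1; 1, 0] ⊗ₖ M i) ⊗ₖ (1 : Matrix κ κ ℝ))
          (fun j : Fin t => (!![1, 0; 0, -1] ⊗ₖ (1 : Matrix ι ι ℝ)) ⊗ₖ L j))
        (fun _ : Fin 1 => (!![0, 1; -1, 0] ⊗ₖ (1 : Matrix ι ι ℝ)) ⊗ₖ (1 : Matrix κ κ ℝ)) :
        (Fin s ⊕ Fin t) ⊕ Fin 1 → Matrix ((Fin 2 × ι) × κ) ((Fin 2 × ι) × κ) ℝ) := by
  obtain ⟨hM1, hM2, hM3⟩ := hM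
  obtain ⟨hL1, hL2, hL3⟩ := hL
  have hMT : ∀ i, (M i)ᵀ = -(M i) := fun i => by nth_rewrite 1 [hM2 i]; simp
  have hLT : ∀ i, (L i)ᵀ = -(L i) := fun i => by nth_rewrite 1 [hL2 i]; simp
  have hMM : ∀ i, M i * M i = -1 := fun i => by
    nth_rewrite 2 [hM2 i]; rw [Matrix.mul_neg, hM1 i]
  have hLL : ∀ i, L i * L i = -1 := fun i => by
    nth_rewrite 2 [hL2 i]; rw [Matrix.mul_neg, hL1 i]
  have hP : (!![0, 1; 1, 0] : Matrix (Fin 2) (Fin 2) ℝ)ᵀ = !![0, 1; 1, 0] := by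
    ext i j; fin_cases i <;> fin_cases j <;> simp
  have hQ : (!![1, 0; 0, -1] : Matrix (Fin 2) (Fin 2) ℝ)ᵀ = !![1, 0; 0, -1] := by
    ext i j; fin_cases i <;> fin_cases j <;> simp
  have hA : (!![0, 1; -1, 0] : Matrix (Fin 2) (Fin 2) ℝ)ᵀ = -(!![0, 1; -1, 0]) := by
    ext i j; fin_cases i <;> fin_cases j <;> simp
  have hPP : (!![0, 1; 1, 0] : Matrix (Fin 2) (Fin 2) ℝ) * !![0, 1; 1, 0] = 1 := by
    ext i j; fin_cases i <;> fin_cases j <;>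
      norm_num [Matrix.mul_apply, Fin.sum_univ_two, Matrix.one_apply]
  have hQQ : (!![1, 0; 0, -1] : Matrix (Fin 2) (Fin 2) ℝ) * !![1, 0; 0, -1] = 1 := by
    ext i j; fin_cases i <;> fin_cases j <;>
      norm_num [Matrix.mul_apply, Fin.sum_univ_two, Matrix.one_apply]
  have hAA : (!![0, 1; -1, 0] : Matrix (Fin 2) (Fin 2) ℝ) * !![0, 1; -1, 0] = -1 := by
    ext i j; fin_cases i <;> fin_cases j <;>
      norm_num [Matrix.mul_apply, Fin.sum_univ_two, Matrix.one_apply]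
  have hPQ : (!![0, 1; 1, 0] : Matrix (Fin 2) (Fin 2) ℝ) * !![1, 0; 0, -1]
      = -(!![1, 0; 0, -1] * !![0, 1; 1, 0]) := by
    ext i j; fin_cases i <;> fin_cases j <;>
      norm_num [Matrix.mul_apply, Fin.sum_univ_two]
  have hPA : (!![0, 1; 1, 0] : Matrix (Fin 2) (Fin 2) ℝ) * !![0, 1; -1, 0]
      = -(!![0, 1; -1, 0] * !![0, 1; 1, 0]) := by
    ext i j; fin_cases i <;> fin_cases j <;>
      norm_num [Matrix.mul_apply, Fin.sum_univ_two]
  have hQA : (!![1, 0; 0, -1] : Matrix (Fin 2) (Fin 2) ℝ) * !![0, 1; -1, 0]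
      = -(!![0, 1; -1, 0] * !![1, 0; 0, -1]) := by
    ext i j; fin_cases i <;> fin_cases j <;>
      norm_num [Matrix.mul_apply, Fin.sum_univ_two]
  have hAP : (!![0, 1; -1, 0] : Matrix (Fin 2) (Fin 2) ℝ) * !![0, 1; 1, 0]
      = -(!![0, 1; 1, 0] * !![0, 1; -1, 0]) := by rw [hPA, neg_neg]
  have hAQ : (!![0, 1; -1, 0] : Matrix (Fin 2) (Fin 2) ℝ) * !![1, 0; 0, -1]
      = -(!![1, 0; 0, -1] * !![0, 1; -1, 0]) := by rw [hQA, neg_neg]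
  refine ⟨?_, ?_, ?_⟩
  · rintro ((i | i) | i)
    · simp only [Sum.elim_inl, kron_transpose, hP, Matrix.transpose_one, hMT,
        kron_neg, neg_kron, Matrix.mul_neg, ← Matrix.mul_kronecker_mul, hPP, hMM,
        Matrix.mul_one, Matrix.one_mul, neg_neg, Matrix.one_kronecker_one]
    · simp only [Sum.elim_inl, Sum.elim_inr, kron_transpose, hQ, Matrix.transpose_one,
        hLT, kron_neg, neg_kron, Matrix.mul_neg, ← Matrix.mul_kronecker_mul, hQQ, hLL,
        Matrix.mul_one, Matrix.one_mul, neg_neg, Matrix.one_kronecker_one]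
    · simp only [Sum.elim_inr, kron_transpose, hA, Matrix.transpose_one,
        kron_neg, neg_kron, Matrix.mul_neg, ← Matrix.mul_kronecker_mul, hAA,
        Matrix.mul_one, Matrix.one_mul, neg_neg, Matrix.one_kronecker_one]
  · rintro ((i | i) | i)
    · simp only [Sum.elim_inl, kron_transpose, hP, Matrix.transpose_one, hMT,
        kron_neg, neg_kron, neg_neg]
    · simp only [Sum.elim_inl, Sum.elim_inr, kron_transpose, hQ, Matrix.transpose_one,
        hLT, kron_neg, neg_kron, neg_neg]
    · simp only [Sum.elim_inr, kron_transpose, hA, Matrix.transpose_one,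
        kron_neg, neg_kron, neg_neg]
  · rintro ((i | i) | i) ((j | j) | j) hij
    · have hij' : i ≠ j := fun h => hij (by rw [h])
      simp only [Sum.elim_inl, ← Matrix.mul_kronecker_mul, hM3 i j hij',
        Matrix.one_mul, Matrix.mul_one, kron_neg, neg_kron, neg_neg]
    · simp only [Sum.elim_inl, Sum.elim_inr, ← Matrix.mul_kronecker_mul, hPQ,
        Matrix.one_mul, Matrix.mul_one, kron_neg, neg_kron, neg_neg]
    · simp only [Sum.elim_inl, Sum.elim_inr, ← Matrix.mul_kronecker_mul, hPA,
        Matrix.one_mul, Matrix.mul_one, kron_neg, neg_kron, neg_neg]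
    · simp only [Sum.elim_inl, Sum.elim_inr, ← Matrix.mul_kronecker_mul, hPQ,
        Matrix.one_mul, Matrix.mul_one, kron_neg, neg_kron, neg_neg]
    · have hij' : i ≠ j := fun h => hij (by rw [h])
      simp only [Sum.elim_inl, Sum.elim_inr, ← Matrix.mul_kronecker_mul, hL3 i j hij',
        Matrix.one_mul, Matrix.mul_one, kron_neg, neg_kron, neg_neg]
    · simp only [Sum.elim_inl, Sum.elim_inr, ← Matrix.mul_kronecker_mul, hQA,
        Matrix.one_mul, Matrix.mul_one, kron_neg, neg_kron, neg_neg]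
    · simp only [Sum.elim_inl, Sum.elim_inr, ← Matrix.mul_kronecker_mul, hAP,
        Matrix.one_mul, Matrix.mul_one, kron_neg, neg_kron, neg_neg]
    · simp only [Sum.elim_inl, Sum.elim_inr, ← Matrix.mul_kronecker_mul, hAQ,
        Matrix.one_mul, Matrix.mul_one, kron_neg, neg_kron, neg_neg]
    · exact (hij (congrArg Sum.inr (Subsingleton.elim i j))).elim
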